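/- Let p > 1, λ = λ₀(p) = (2/π)·arccos((p−1)/(p+1)), and define v₁(τ,θ) = e^{λτ}·(cot(λπ/4) + tan(λπ/2))·sin λθ and v₂(τ,θ) = e^{λτ}·(cos λθ + tan(λπ/2)·sin λθ) on ℝ × [0,π/4] and ℝ × [π/4,π/2] respectively. Then: (i) both v₁ and v₂ satisfy ∂²v/∂τ² + ∂²v/∂θ² = 0; (ii) v₁(τ,0) = 0 for all τ; (iii) ∂v₂/∂θ(τ,π/2) = 0 for all τ; (iv) v₁(τ,π/4) = v₂(τ,π/4) for all τ; and (v) ∂v₁/∂θ(τ,π/4) = p·∂v₂/∂θ(τ,π/4) for all τ. Hence the leading order singular term u₁ = r^λ(cot(λπ/4)+tan(λπ/2)) sin λθ in Ω₁, u₂ = r^λ(cos λθ + tan(λπ/2) sin λθ) in Ω₂ solves the interface problem with zero right-hand side in the modified polar coordinates (τ,θ) = (ln r, θ). -/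

import Mathlib

open Real

lemma myDerivTrig (E A B l : ℝ) :
    deriv (fun t : ℝ => E * (A * Real.cos (l * t) + B * Real.sin (l * t))) =
    fun t : ℝ => E * ((l * B) * Real.cos (l * t) + (-(l * A)) * Real.sin (l * t)) := by
  funext t
  have h1 : HasDerivAt (fun t : ℝ => l * t) l t := by
    simpa using (hasDerivAt_id t).const_mul l
  have h := ((h1.cos.const_mul A).add (h1.sin.const_mul B)).const_mul E
  rw [show deriv (fun t : ℝ => E * (A * Real.cos (l * t) + B * Real.sin (l * t))) t =
    E * (A * (-Real.sin (l * t) * l) + B * (Real.cos (l * t) * l)) from h.deriv]; ring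

lemma myDerivExp (l C : ℝ) :
    deriv (fun s : ℝ => Real.exp (l * s) * C) =
    fun s : ℝ => Real.exp (l * s) * (l * C) := by
  funext s
  have h1 : HasDerivAt (fun s : ℝ => l * s) l s := by
    simpa using (hasDerivAt_id s).const_mul l
  have h := h1.exp.mul_const C
  rw [h.deriv]; ring

/-- For p > 1 and λ = λ₀(p) = (2/π)·arccos((p−1)/(p+1)), the functions
v₁(τ,θ) = e^{λτ}(cot(λπ/4)+tan(λπ/2)) sin λθ and v₂(τ,θ) = e^{λτ}(cos λθ + tan(λπ/2) sin λθ)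
solve the interface problem with zero right-hand side in the modified polar coordinates:
(i) both are harmonic in (τ,θ), (ii) v₁ vanishes on θ = 0, (iii) ∂v₂/∂θ vanishes on
θ = π/2, (iv) v₁ = v₂ on θ = π/4, and (v) ∂v₁/∂θ = p·∂v₂/∂θ on θ = π/4. -/
theorem leading_singular_term_solves_interface_problem (p : ℝ) (hp : 1 < p) (lam : ℝ)
    (hlam : lam = (2 / π) * Real.arccos ((p - 1) / (p + 1)))
    (v₁ v₂ : ℝ → ℝ → ℝ)
    (hv₁ : v₁ = fun τ θ => Real.exp (lam * τ) *
      ((Real.cot (lam * π / 4) + Real.tan (lam * π / 2)) * Real.sin (lam * θ)))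
    (hv₂ : v₂ = fun τ θ => Real.exp (lam * τ) *
      (Real.cos (lam * θ) + Real.tan (lam * π / 2) * Real.sin (lam * θ))) :
    (∀ τ : ℝ, ∀ θ ∈ Set.Icc (0 : ℝ) (π / 4),
      deriv (deriv (fun s : ℝ => v₁ s θ)) τ + deriv (deriv (fun t : ℝ => v₁ τ t)) θ = 0) ∧
    (∀ τ : ℝ, ∀ θ ∈ Set.Icc (π / 4) (π / 2),
      deriv (deriv (fun s : ℝ => v₂ s θ)) τ + deriv (deriv (fun t : ℝ => v₂ τ t)) θ = 0) ∧
    (∀ τ : ℝ, v₁ τ 0 = 0) ∧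
    (∀ τ : ℝ, deriv (fun t : ℝ => v₂ τ t) (π / 2) = 0) ∧
    (∀ τ : ℝ, v₁ τ (π / 4) = v₂ τ (π / 4)) ∧
    (∀ τ : ℝ, deriv (fun t : ℝ => v₁ τ t) (π / 4) =
      p * deriv (fun t : ℝ => v₂ τ t) (π / 4)) := by
  have hpi : (0:ℝ) < π := Real.pi_pos
  set c : ℝ := (p - 1) / (p + 1) with hc
  have hp1 : (0:ℝ) < p + 1 := by linarith
  have hc0 : 0 < c := by
    apply div_pos <;> linarith
  have hc1 : c < 1 := by rw [hc, div_lt_one hp1]; linarith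
  have hB : lam * π / 2 = Real.arccos c := by
    rw [hlam]; field_simp
  have hcosB : Real.cos (lam * π / 2) = c := by
    rw [hB, Real.cos_arccos (by linarith) (le_of_lt hc1)]
  have hlam0 : 0 < lam := by
    have h1 : 0 < Real.arccos c := Real.arccos_pos.2 hc1
    rw [hlam]; positivity
  have hlam1 : lam < 1 := by
    have h1 : Real.arccos c < π / 2 := Real.arccos_lt_pi_div_two.2 hc0
    rw [hlam]
    calc 2 / π * Real.arccos c < 2 / π * (π / 2) := by
          apply mul_lt_mul_of_pos_left h1; positivity
      _ = 1 := by field_simp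
  have hA0 : 0 < lam * π / 4 := by positivity
  have hA1 : lam * π / 4 < π / 2 := by nlinarith
  have hsinA : 0 < Real.sin (lam * π / 4) :=
    Real.sin_pos_of_pos_of_lt_pi hA0 (by linarith)
  have hcosA : 0 < Real.cos (lam * π / 4) :=
    Real.cos_pos_of_mem_Ioo ⟨by linarith, hA1⟩
  have hBA : lam * π / 2 = 2 * (lam * π / 4) := by ring
  have hcos2 : c = 2 * Real.cos (lam * π / 4) ^ 2 - 1 := by
    rw [← hcosB, hBA, Real.cos_two_mul]
  have hsinB : Real.sin (lam * π / 2) =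
      2 * Real.sin (lam * π / 4) * Real.cos (lam * π / 4) := by
    rw [hBA, Real.sin_two_mul]
  have htanB : Real.tan (lam * π / 2) =
      Real.sin (lam * π / 2) / Real.cos (lam * π / 2) := Real.tan_eq_sin_div_cos _
  have hcotA : Real.cot (lam * π / 4) =
      Real.cos (lam * π / 4) / Real.sin (lam * π / 4) := Real.cot_eq_cos_div_sin _
  have hcB0 : Real.cos (lam * π / 2) ≠ 0 := by rw [hcosB]; exact ne_of_gt hc0
  set K : ℝ := Real.cot (lam * π / 4) + Real.tan (lam * π / 2) with hK
  refine ⟨?_, ?_, ?_, ?_, ?_, ?_⟩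
  · -- harmonicity of v₁
    intro τ θ _
    rw [hv₁]
    simp only
    rw [myDerivExp, myDerivExp]
    have h2 : (fun t : ℝ => Real.exp (lam * τ) * (K * Real.sin (lam * t))) =
        fun t : ℝ => Real.exp (lam * τ) *
          ((0:ℝ) * Real.cos (lam * t) + K * Real.sin (lam * t)) := by
      funext t; ring
    rw [h2, myDerivTrig, myDerivTrig]
    ring
  · -- harmonicity of v₂
    intro τ θ _
    rw [hv₂]
    simp only
    rw [myDerivExp, myDerivExp]
    have h2 : (fun t : ℝ => Real.exp (lam * τ) *
        (Real.cos (lam * t) + Real.tan (lam * π / 2) * Real.sin (lam * t))) =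
        fun t : ℝ => Real.exp (lam * τ) *
          ((1:ℝ) * Real.cos (lam * t) + Real.tan (lam * π / 2) * Real.sin (lam * t)) := by
      funext t; ring
    rw [h2, myDerivTrig, myDerivTrig]
    ring
  · intro τ; rw [hv₁]; simp
  · -- Neumann at π/2
    intro τ
    rw [hv₂]
    simp only
    have h2 : (fun t : ℝ => Real.exp (lam * τ) *
        (Real.cos (lam * t) + Real.tan (lam * π / 2) * Real.sin (lam * t))) =
        fun t : ℝ => Real.exp (lam * τ) *
          ((1:ℝ) * Real.cos (lam * t) + Real.tan (lam * π / 2) * Real.sin (lam * t)) := by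
      funext t; ring
    rw [h2, myDerivTrig]
    beta_reduce
    have harg : lam * (π / 2) = lam * π / 2 := by ring
    rw [harg, htanB]
    field_simp
    ring
  · -- continuity at π/4
    intro τ
    rw [hv₁, hv₂]
    simp only
    have harg : lam * (π / 4) = lam * π / 4 := by ring
    rw [harg, hK, hcotA]
    field_simp
  · -- flux jump at π/4
    intro τ
    rw [hv₁, hv₂]
    simp only
    have h1 : (fun t : ℝ => Real.exp (lam * τ) * (K * Real.sin (lam * t))) =
        fun t : ℝ => Real.exp (lam * τ) *
          ((0:ℝ) * Real.cos (lam * t) + K * Real.sin (lam * t)) := by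
      funext t; ring
    have h2 : (fun t : ℝ => Real.exp (lam * τ) *
        (Real.cos (lam * t) + Real.tan (lam * π / 2) * Real.sin (lam * t))) =
        fun t : ℝ => Real.exp (lam * τ) *
          ((1:ℝ) * Real.cos (lam * t) + Real.tan (lam * π / 2) * Real.sin (lam * t)) := by
      funext t; ring
    rw [h1, h2, myDerivTrig, myDerivTrig]
    simp only
    have harg : lam * (π / 4) = lam * π / 4 := by ring
    rw [harg]
    have hcA2 : Real.cos (lam * π / 4) ^ 2 = p / (p + 1) := by
      have h := hcos2
      rw [hc] at h
      field_simp at h ⊢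
      linarith
    have hsA2 : Real.sin (lam * π / 4) ^ 2 = 1 / (p + 1) := by
      have h := Real.sin_sq_add_cos_sq (lam * π / 4)
      rw [hcA2] at h
      field_simp at h ⊢
      linarith
    have key : K * Real.cos (lam * π / 4) =
        p * (Real.tan (lam * π / 2) * Real.cos (lam * π / 4) - Real.sin (lam * π / 4)) := by
      rw [hK, hcotA, htanB, hsinB, hcosB, hc]
      have hs0 : Real.sin (lam * π / 4) ≠ 0 := ne_of_gt hsinA
      have hpm : p - 1 ≠ 0 := by linarith
      have hpyth : Real.sin (lam * π / 4) ^ 2 + Real.cos (lam * π / 4) ^ 2 = 1 :=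
        Real.sin_sq_add_cos_sq _
      have hsA2' : (p + 1) * Real.sin (lam * π / 4) ^ 2 = 1 := by
        rw [hsA2]; field_simp
      field_simp
      linear_combination ((p - 1) * (1 - 2 * (p + 1) * Real.sin (lam * π / 4) ^ 2)) * hpyth +
        ((p - 1) * (2 * Real.sin (lam * π / 4) ^ 2 - 1)) * hsA2'
    linear_combination (Real.exp (lam * τ) * lam) * key
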